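/- Let A be a d×d complex matrix. Then |det(Id + A)| ≤ exp(‖A‖₁), where ‖A‖₁ is the trace norm of A. -/

import Mathlib

/-- The operator norm of a matrix acting on Euclidean space `ℂ^d`. -/
noncomputable def opNorm {d : ℕ} (A : Matrix (Fin d) (Fin d) ℂ) : ℝ :=
  ‖Matrix.toEuclideanCLM (𝕜 := ℂ) A‖

/-- The trace norm of a matrix: the sum of its singular values, i.e. the square
roots of the eigenvalues of `Aᴴ * A`. -/
noncomputable def traceNorm {d : ℕ} (A : Matrix (Fin d) (Fin d) ℂ) : ℝ :=
  ∑ i, Real.sqrt ((Matrix.isHermitian_conjTranspose_mul_self A).eigenvalues i)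

open scoped ComplexOrder

section Aux

open Matrix

open Matrix in
lemma abs_det_le_one_of_rows {d : ℕ} (C : Matrix (Fin d) (Fin d) ℂ)
    (h : ∀ i, ∑ j, Complex.normSq (C i j) ≤ 1) : ‖C.det‖ ≤ 1 := by
  have hG : (C * Cᴴ).PosSemidef := posSemidef_self_mul_conjTranspose C
  have hH := hG.isHermitian
  have hμ0 : ∀ i, 0 ≤ hH.eigenvalues i := hG.eigenvalues_nonneg
  have htr : ∑ i, hH.eigenvalues i = ∑ i, ∑ j, Complex.normSq (C i j) := by
    have h1 : (C * Cᴴ).trace = ∑ i, (hH.eigenvalues i : ℂ) := by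
      conv_lhs => rw [hH.spectral_theorem]
      rw [Unitary.conjStarAlgAut_apply, trace_mul_cycle, (Matrix.mem_unitaryGroup_iff').mp (hH.eigenvectorUnitary).2, one_mul]
      simp [Matrix.trace, Matrix.diag]
    have h2 : (C * Cᴴ).trace = ((∑ i, ∑ j, Complex.normSq (C i j) : ℝ) : ℂ) := by
      simp [Matrix.trace, Matrix.diag, Matrix.mul_apply, Complex.mul_conj]
    rw [h2] at h1
    exact_mod_cast h1.symm
  have hdet : (‖C.det‖)^2 = ∏ i, hH.eigenvalues i := by
    have h1 : (C * Cᴴ).det = ∏ i, (hH.eigenvalues i : ℂ) := hH.det_eq_prod_eigenvalues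
    rw [det_mul, det_conjTranspose] at h1
    have : (((‖C.det‖)^2 : ℝ) : ℂ) = (((∏ i, hH.eigenvalues i : ℝ)) : ℂ) := by
      rw [← Complex.normSq_eq_norm_sq]
      push_cast
      rw [← h1, Complex.star_def, Complex.mul_conj]
    exact_mod_cast this
  have key : (‖C.det‖)^2 ≤ 1 := by
    rw [hdet]
    calc ∏ i, hH.eigenvalues i ≤ ∏ i, Real.exp (hH.eigenvalues i - 1) := by
          apply Finset.prod_le_prod (fun i _ => hμ0 i)
          intro i _
          have := Real.add_one_le_exp (hH.eigenvalues i - 1)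
          linarith
      _ = Real.exp (∑ i, (hH.eigenvalues i - 1)) := by rw [Real.exp_sum]
      _ ≤ 1 := by
          rw [Real.exp_le_one_iff, Finset.sum_sub_distrib, htr]
          have : ∑ i, ∑ j, Complex.normSq (C i j) ≤ ∑ _i : Fin d, (1:ℝ) :=
            Finset.sum_le_sum (fun i _ => h i)
          simp only [Finset.sum_const, Finset.card_univ, Fintype.card_fin, nsmul_eq_mul,
            mul_one] at this
          simp only [Finset.sum_const, Finset.card_univ, Fintype.card_fin, nsmul_eq_mul, mul_one,
            smul_eq_mul]
          linarith
  nlinarith [norm_nonneg C.det]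

open Matrix in
lemma exists_svd {d : ℕ} (A : Matrix (Fin d) (Fin d) ℂ) :
    ∃ U W : Matrix (Fin d) (Fin d) ℂ, U ∈ Matrix.unitaryGroup (Fin d) ℂ ∧
      W ∈ Matrix.unitaryGroup (Fin d) ℂ ∧
      A = U * Matrix.diagonal (fun i =>
        ((Real.sqrt ((Matrix.isHermitian_conjTranspose_mul_self A).eigenvalues i) : ℝ) : ℂ)) * Wᴴ := by
  set hH := Matrix.isHermitian_conjTranspose_mul_self A with hHdef
  set σ : Fin d → ℝ := fun i => Real.sqrt (hH.eigenvalues i) with hσdef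
  have hlam0 : ∀ i, 0 ≤ hH.eigenvalues i := (posSemidef_conjTranspose_mul_self A).eigenvalues_nonneg
  have hσ0 : ∀ i, 0 ≤ σ i := fun i => Real.sqrt_nonneg _
  have hσsq : ∀ i, σ i ^ 2 = hH.eigenvalues i := fun i => Real.sq_sqrt (hlam0 i)
  -- inner products of the images A wᵢ
  have hAw : ∀ i j, dotProduct (star (A *ᵥ ⇑(hH.eigenvectorBasis i)))
      (A *ᵥ ⇑(hH.eigenvectorBasis j))
      = if i = j then (hH.eigenvalues i : ℂ) else 0 := by
    intro i j
    rw [star_mulVec, dotProduct_mulVec, vecMul_vecMul, ← dotProduct_mulVec,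
      hH.mulVec_eigenvectorBasis, RCLike.real_smul_eq_coe_smul (K := ℂ), dotProduct_smul]
    have := orthonormal_iff_ite.mp hH.eigenvectorBasis.orthonormal i j
    rw [EuclideanSpace.inner_eq_star_dotProduct, dotProduct_comm] at this
    rw [show (dotProduct (star ⇑(hH.eigenvectorBasis i)) ⇑(hH.eigenvectorBasis j)) =
      if i = j then 1 else 0 from this]
    by_cases hij : i = j <;> simp [hij]
  have hAw0 : ∀ j, hH.eigenvalues j = 0 → A *ᵥ ⇑(hH.eigenvectorBasis j) = 0 := by
    intro j hj
    have := hAw j j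
    simp only [if_pos rfl, hj, Complex.ofReal_zero] at this
    exact (dotProduct_star_self_eq_zero).mp this
  -- the orthonormal family on nonzero eigenvalues
  set v : Fin d → EuclideanSpace ℂ (Fin d) := fun i =>
    ((σ i : ℂ))⁻¹ • ((WithLp.equiv 2 _).symm (A *ᵥ ⇑(hH.eigenvectorBasis i))) with hvdef
  have hvon : Orthonormal ℂ (Set.restrict {i | hH.eigenvalues i ≠ 0} v) := by
    rw [orthonormal_iff_ite]
    rintro ⟨i, hi⟩ ⟨j, hj⟩
    show inner ℂ (v i) (v j) = _
    rw [hvdef]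
    simp only [inner_smul_left, inner_smul_right]
    rw [WithLp.equiv_symm_apply, EuclideanSpace.inner_toLp_toLp, dotProduct_comm, hAw i j]
    by_cases hij : i = j
    · subst hij
      simp only [if_pos rfl, Subtype.mk.injEq, map_inv₀, Complex.conj_ofReal]
      have hσne : (σ i : ℂ) ≠ 0 := by
        simp only [ne_eq, Complex.ofReal_eq_zero]
        intro h
        exact hi (by rw [← hσsq i, h]; ring)
      field_simp
      rw [if_pos trivial, if_pos trivial, mul_one, ← Complex.ofReal_pow, hσsq i]
    · rw [if_neg hij, mul_zero, mul_zero, if_neg (by simpa using hij)]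
  obtain ⟨b, hb⟩ := hvon.exists_orthonormalBasis_extension_of_card_eq (by simp)
  -- key: A wⱼ = σⱼ • b j
  have key : ∀ j, A *ᵥ ⇑(hH.eigenvectorBasis j) = fun i => (σ j : ℂ) * (b j) i := by
    intro j
    by_cases hj : hH.eigenvalues j = 0
    · have hσj : σ j = 0 := by rw [hσdef]; simp [hj]
      rw [hAw0 j hj]
      funext i
      simp [hσj]
    · have hbj := hb j hj
      have hσne : (σ j : ℂ) ≠ 0 := by
        simp only [ne_eq, Complex.ofReal_eq_zero]
        intro h
        exact hj (by rw [← hσsq j, h]; ring)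
      funext i
      have : (b j) i = ((σ j : ℂ))⁻¹ * (A *ᵥ ⇑(hH.eigenvectorBasis j)) i := by
        rw [hbj]; rfl
      rw [this]
      field_simp
  -- the matrices
  refine ⟨Matrix.of (fun i j => (b j) i), hH.eigenvectorUnitary, ?_, (hH.eigenvectorUnitary).2, ?_⟩
  · rw [Matrix.mem_unitaryGroup_iff']
    ext i j
    have := orthonormal_iff_ite.mp b.orthonormal i j
    rw [EuclideanSpace.inner_eq_star_dotProduct, dotProduct_comm] at this
    simp only [Matrix.mul_apply, Matrix.star_apply, Matrix.star_eq_conjTranspose,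
      Matrix.conjTranspose_apply, Matrix.of_apply, Matrix.one_apply]
    rw [← this]
    rfl
  · have hW := (hH.eigenvectorUnitary).2
    have h1 : A * (hH.eigenvectorUnitary : Matrix (Fin d) (Fin d) ℂ) =
        Matrix.of (fun i j => (b j) i) * Matrix.diagonal (fun i => ((σ i : ℝ) : ℂ)) := by
      ext i j
      rw [Matrix.mul_diagonal]
      have : (A * (hH.eigenvectorUnitary : Matrix (Fin d) (Fin d) ℂ)) i j
          = (A *ᵥ ⇑(hH.eigenvectorBasis j)) i := by
        simp [Matrix.mul_apply, Matrix.mulVec, dotProduct]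
      rw [this, key j]
      simp [mul_comm]
    calc A = A * ((hH.eigenvectorUnitary : Matrix (Fin d) (Fin d) ℂ) *
            star (hH.eigenvectorUnitary : Matrix (Fin d) (Fin d) ℂ)) := by
          rw [Matrix.mem_unitaryGroup_iff.mp hW, mul_one]
      _ = _ := by rw [← mul_assoc, h1, Matrix.star_eq_conjTranspose]

open Matrix in
lemma abs_det_of_unitary {d : ℕ} {Q : Matrix (Fin d) (Fin d) ℂ}
    (hQ : Q * star Q = 1) : ‖Q.det‖ = 1 := by
  have h := congrArg Matrix.det hQ
  rw [det_mul, Matrix.star_eq_conjTranspose, det_conjTranspose, det_one] at h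
  have : Complex.normSq Q.det = 1 := by
    have := h
    rw [Complex.star_def, Complex.mul_conj] at this
    exact_mod_cast this
  rw [← Complex.sq_norm] at this
  nlinarith [norm_nonneg Q.det]

theorem abs_det_one_add_le_exp_traceNorm {d : ℕ} (A : Matrix (Fin d) (Fin d) ℂ) :
    ‖(1 + A).det‖ ≤ Real.exp (traceNorm A) := by
  obtain ⟨U, W, hU, hW, hA⟩ := exists_svd A
  set σ : Fin d → ℝ := fun i =>
    Real.sqrt ((Matrix.isHermitian_conjTranspose_mul_self A).eigenvalues i) with hσdef
  have hσ0 : ∀ i, 0 ≤ σ i := fun i => Real.sqrt_nonneg _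
  have hσ1 : ∀ i, (0:ℝ) < 1 + σ i := fun i => by have := hσ0 i; linarith
  set D : Matrix (Fin d) (Fin d) ℂ := Matrix.diagonal (fun i => ((σ i : ℝ) : ℂ)) with hDdef
  set M : Matrix (Fin d) (Fin d) ℂ := Uᴴ * W with hMdef
  have hUU' : star U * U = 1 := Matrix.mem_unitaryGroup_iff'.mp hU
  have hUU : U * star U = 1 := Matrix.mem_unitaryGroup_iff.mp hU
  have hWW' : star W * W = 1 := Matrix.mem_unitaryGroup_iff'.mp hW
  have hWW : W * star W = 1 := Matrix.mem_unitaryGroup_iff.mp hW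
  have hsU : (star U : Matrix (Fin d) (Fin d) ℂ) = Uᴴ := Matrix.star_eq_conjTranspose U
  have hsW : (star W : Matrix (Fin d) (Fin d) ℂ) = Wᴴ := Matrix.star_eq_conjTranspose W
  -- M is unitary
  have hMM : M * star M = 1 := by
    rw [hMdef, ← hsU, StarMul.star_mul, star_star]
    calc star U * W * (star W * U) = star U * (W * star W) * U := by noncomm_ring
      _ = 1 := by rw [hWW, mul_one, hUU']
  -- decomposition of 1 + A
  have h1 : (1 : Matrix (Fin d) (Fin d) ℂ) + A = U * (M + D) * Wᴴ := by
    rw [hMdef, mul_add, add_mul, ← hsU, ← hsW]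
    rw [show U * (star U * W) * star W = (U * star U) * (W * star W) by noncomm_ring, hUU, hWW,
      one_mul, hsW, ← hA]
  -- rows of M have unit norm
  have hrow : ∀ i, ∑ j, Complex.normSq (M i j) = 1 := by
    intro i
    have h2 : (M * star M) i i = 1 := by rw [hMM]; simp [Matrix.one_apply]
    rw [Matrix.mul_apply] at h2
    have h3 : ∑ j, M i j * (star M) j i = ((∑ j, Complex.normSq (M i j) : ℝ) : ℂ) := by
      push_cast
      apply Finset.sum_congr rfl
      intro j _
      rw [Matrix.star_apply, Complex.star_def, Complex.mul_conj]
    rw [h3] at h2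
    exact_mod_cast h2
  -- diagonal bound
  have hdiag : ∀ i, (M i i).re ≤ 1 := by
    intro i
    have h2 : Complex.normSq (M i i) ≤ 1 := by
      rw [← hrow i]
      exact Finset.single_le_sum (fun j _ => Complex.normSq_nonneg _) (Finset.mem_univ i)
    calc (M i i).re ≤ ‖M i i‖ := Complex.re_le_norm _
      _ ≤ 1 := by
          rw [Complex.norm_def]
          exact Real.sqrt_le_one.mpr h2
  -- row bound for M + D
  have hB : ∀ i, ∑ j, Complex.normSq ((M + D) i j) ≤ (1 + σ i)^2 := by
    intro i
    have hsplit : ∀ j, Complex.normSq ((M + D) i j)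
        = Complex.normSq (M i j) + (if j = i then 2 * σ i * (M i i).re + σ i ^ 2 else 0) := by
      intro j
      by_cases hji : j = i
      · subst hji
        simp only [Matrix.add_apply, hDdef, Matrix.diagonal_apply_eq, if_pos rfl]
        simp only [Complex.normSq_apply, Complex.add_re, Complex.add_im, Complex.ofReal_re,
          Complex.ofReal_im, add_zero, eq_self_iff_true, if_true]
        ring
      · simp only [Matrix.add_apply, hDdef, Matrix.diagonal_apply, if_neg hji,
          if_neg (fun h : i = j => hji h.symm), add_zero, if_neg hji]
    calc ∑ j, Complex.normSq ((M + D) i j)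
        = ∑ j, (Complex.normSq (M i j) + (if j = i then 2 * σ i * (M i i).re + σ i ^ 2 else 0)) :=
          Finset.sum_congr rfl (fun j _ => hsplit j)
      _ = 1 + (2 * σ i * (M i i).re + σ i ^ 2) := by
          rw [Finset.sum_add_distrib, hrow i, Finset.sum_ite_eq' Finset.univ i
            (fun _ => 2 * σ i * (M i i).re + σ i ^ 2), if_pos (Finset.mem_univ i)]
      _ ≤ (1 + σ i)^2 := by nlinarith [hdiag i, hσ0 i]
  -- scaled matrix
  set C : Matrix (Fin d) (Fin d) ℂ :=
    Matrix.diagonal (fun i => (((1 + σ i)⁻¹ : ℝ) : ℂ)) * (M + D) with hCdef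
  have hCrow : ∀ i, ∑ j, Complex.normSq (C i j) ≤ 1 := by
    intro i
    have : ∀ j, Complex.normSq (C i j) = ((1 + σ i)⁻¹)^2 * Complex.normSq ((M + D) i j) := by
      intro j
      rw [hCdef, Matrix.diagonal_mul, Complex.normSq_mul, Complex.normSq_ofReal]
      ring
    rw [Finset.sum_congr rfl (fun j _ => this j), ← Finset.mul_sum]
    calc ((1 + σ i)⁻¹)^2 * ∑ j, Complex.normSq ((M + D) i j)
        ≤ ((1 + σ i)⁻¹)^2 * (1 + σ i)^2 := by
          apply mul_le_mul_of_nonneg_left (hB i) (by positivity)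
      _ = 1 := by
          rw [← mul_pow, inv_mul_cancel₀ (ne_of_gt (hσ1 i)), one_pow]
  have hCle := abs_det_le_one_of_rows C hCrow
  -- relate determinants
  have hdetC : ‖C.det‖ = (∏ i, (1 + σ i)⁻¹) * ‖(M + D).det‖ := by
    rw [hCdef, det_mul, norm_mul, det_diagonal]
    congr 1
    rw [← Complex.ofReal_prod]
    · rw [Complex.norm_of_nonneg (Finset.prod_nonneg (fun i _ => by positivity))]
  have hMD : ‖(M + D).det‖ ≤ ∏ i, (1 + σ i) := by
    have hpos : (0:ℝ) < ∏ i, (1 + σ i) := Finset.prod_pos (fun i _ => hσ1 i)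
    have hinv : (0:ℝ) < ∏ i, (1 + σ i)⁻¹ := Finset.prod_pos (fun i _ => by positivity)
    rw [hdetC] at hCle
    rw [Finset.prod_inv_distrib] at hCle
    calc ‖(M + D).det‖
        = (∏ i, (1 + σ i)) * ((∏ i, (1 + σ i))⁻¹ * ‖(M + D).det‖) := by
          field_simp
      _ ≤ (∏ i, (1 + σ i)) * 1 := by
          apply mul_le_mul_of_nonneg_left hCle (le_of_lt hpos)
      _ = _ := mul_one _
  -- final chain
  have habs : ‖(1 + A).det‖ = ‖(M + D).det‖ := by
    rw [h1, det_mul, det_mul, norm_mul, norm_mul,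
      abs_det_of_unitary hUU, one_mul]
    have hWH : Wᴴ * star Wᴴ = 1 := by rw [← hsW, star_star, hWW']
    rw [abs_det_of_unitary hWH, mul_one]
  rw [habs]
  calc ‖(M + D).det‖ ≤ ∏ i, (1 + σ i) := hMD
    _ ≤ ∏ i, Real.exp (σ i) := by
        apply Finset.prod_le_prod (fun i _ => le_of_lt (hσ1 i))
        intro i _
        have := Real.add_one_le_exp (σ i)
        linarith
    _ = Real.exp (∑ i, σ i) := by rw [Real.exp_sum]
    _ = Real.exp (traceNorm A) := rfl

end Aux
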